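/- arXiv:1903.06180 — 3 statements merged into one kernel-verified Lean document; each statement's English description precedes it below -/
import Mathlib

section
/- If E is a completely positive map (represented by a positive semidefinite Choi matrix) and W is positive semidefinite, then the link product D * E := Tr_O[(E ⊗ 1)(1 ⊗ D^{T_O})] of two positive semidefinite operators D and E is positive semidefinite. -/
open Matrix ComplexOrder

variable {I O F : Type*} [Fintype I] [Fintype O] [Fintype F]

/-- The link product `D * E := Tr_O[(E ⊗ 1_F)(1_I ⊗ D^{T_O})]`, written out in
components: `(D * E)((i,f),(i',f')) = ∑_{o,o'} E((i,o),(i',o')) · D((o,f),(o',f'))`. -/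
noncomputable def linkProd (D : Matrix (O × F) (O × F) ℂ)
    (E : Matrix (I × O) (I × O) ℂ) : Matrix (I × F) (I × F) ℂ :=
  fun p q => ∑ o : O, ∑ o' : O, E (p.1, o) (q.1, o') * D (o, p.2) (o', q.2)

private theorem sum_swap4 {α β γ δ M : Type*} [Fintype α] [Fintype β] [Fintype γ]
    [Fintype δ] [AddCommMonoid M] (f : α → β → γ → δ → M) :
    (∑ a, ∑ b, ∑ c, ∑ d, f a b c d) = ∑ c, ∑ d, ∑ a, ∑ b, f a b c d := by
  have h1 : (∑ p : α × β, ∑ q : γ × δ, f p.1 p.2 q.1 q.2)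
      = ∑ a, ∑ b, ∑ c, ∑ d, f a b c d := by
    simp [Fintype.sum_prod_type]
  have h2 : (∑ q : γ × δ, ∑ p : α × β, f p.1 p.2 q.1 q.2)
      = ∑ c, ∑ d, ∑ a, ∑ b, f a b c d := by
    simp [Fintype.sum_prod_type]
  rw [← h1, ← h2]
  exact Finset.sum_comm

/-- The link product of two positive semidefinite operators is positive semidefinite. -/
theorem linkProd_posSemidef (D : Matrix (O × F) (O × F) ℂ)
    (E : Matrix (I × O) (I × O) ℂ) (hD : D.PosSemidef) (hE : E.PosSemidef) :
    (linkProd D E).PosSemidef := by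
  classical
  obtain ⟨A, hA⟩ : ∃ A, E = Aᴴ * A := by open scoped MatrixOrder in exact CStarAlgebra.nonneg_iff_eq_star_mul_self.mp hE.nonneg
  obtain ⟨B, hB⟩ : ∃ B, D = Bᴴ * B := by open scoped MatrixOrder in exact CStarAlgebra.nonneg_iff_eq_star_mul_self.mp hD.nonneg
  set C : Matrix ((I × O) × (O × F)) (I × F) ℂ :=
    fun k p => ∑ o : O, A k.1 (p.1, o) * B k.2 (o, p.2) with hC
  have key : linkProd D E = Cᴴ * C := by
    ext p q
    rw [Matrix.mul_apply]
    simp only [Matrix.conjTranspose_apply]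
    simp only [linkProd, hA, hB, Matrix.mul_apply, Matrix.conjTranspose_apply, hC,
      star_sum, star_mul', Finset.sum_mul, Finset.mul_sum]
    conv_rhs => rw [Fintype.sum_prod_type]
    rw [sum_swap4 (f := fun (a : O) (b : O) (c : O × F) (d : I × O) =>
      star (A d (p.1, a)) * A d (q.1, b) * (star (B c (a, p.2)) * B c (b, q.2)))]
    have hcomm : ∀ g : (O × F) → (I × O) → ℂ,
        (∑ c : O × F, ∑ d : I × O, g c d) = ∑ d : I × O, ∑ c : O × F, g c d :=
      fun g => Finset.sum_comm
    rw [hcomm]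
    refine Finset.sum_congr rfl fun k1 _ => ?_
    refine Finset.sum_congr rfl fun k2 _ => ?_
    have hcomm2 : ∀ g : O → O → ℂ, (∑ a : O, ∑ b : O, g a b) = ∑ b, ∑ a, g a b :=
      fun g => Finset.sum_comm
    rw [hcomm2]
    refine Finset.sum_congr rfl fun o _ => ?_
    refine Finset.sum_congr rfl fun o' _ => ?_
    ring
  rw [key]
  exact Matrix.posSemidef_conjTranspose_mul_self C
end

section
/- The link product is compatible with composition of maps in the Choi representation: if E is the Choi matrix of a linear map ℰ: B(H_I) → B(H_O) and D is the Choi matrix of 𝒟: B(H_O) → B(H_F), then D * E is the Choi matrix of the composition 𝒟 ∘ ℰ. -/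
open Matrix
variable {I O F : Type*} [Fintype I] [Fintype O] [Fintype F]
  [DecidableEq I] [DecidableEq O] [DecidableEq F]
noncomputable def choi (ℰ : Matrix I I ℂ →ₗ[ℂ] Matrix O O ℂ) :
    Matrix (I × O) (I × O) ℂ :=
  fun p q => ℰ (Matrix.single p.1 q.1 1) p.2 q.2
/-- The link product realizes composition of maps in the Choi representation:
if `E` is the Choi matrix of `ℰ : B(H_I) → B(H_O)` and `D` that of
`𝒟 : B(H_O) → B(H_F)`, then `D * E` is the Choi matrix of `𝒟 ∘ ℰ`. -/
theorem linkProd_choi_comp (ℰ : Matrix I I ℂ →ₗ[ℂ] Matrix O O ℂ)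
    (𝒟 : Matrix O O ℂ →ₗ[ℂ] Matrix F F ℂ) :
    linkProd (choi 𝒟) (choi ℰ) = choi (𝒟 ∘ₗ ℰ) := by
  funext p q
  simp only [linkProd, choi, LinearMap.comp_apply]
  conv_rhs => rw [matrix_eq_sum_single (ℰ (single p.1 q.1 1))]
  rw [map_sum, Matrix.sum_apply]
  refine Finset.sum_congr rfl fun o _ => ?_
  rw [map_sum, Matrix.sum_apply]
  refine Finset.sum_congr rfl fun o' _ => ?_
  have : single o o' (ℰ (single p.1 q.1 1) o o')
      = (ℰ (single p.1 q.1 1) o o') • single o o' 1 := by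
    rw [smul_single, smul_eq_mul, mul_one]
  rw [this, _root_.map_smul, Matrix.smul_apply, smul_eq_mul]
end

section
/- Applying the filtering Kraus operator M_0 = √x |0⟩⟨0| + √y |1⟩⟨1|, with x = min(p1 q / (p0 (1−q)), 1) and y = min(p0 q / (p1 (1−q)), 1) where q = max(p0',p1') and 1−q = min(p0',p1'), to the state √p0 |0⟩ + √p1 |1⟩ yields, after normalization, a state of the form √p0'' |0⟩ + √p1'' |1⟩ where {p0'', p1''} = {p0', p1'} as a multiset; the success probability (squared norm of the unnormalized output) equals min(p0,p1)/min(p0',p1'). -/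
lemma filter_aux (p0 p1 q0 q1 : ℝ)
    (hp0 : 0 < p0) (hp1 : 0 < p1) (hq0 : 0 < q0) (hq1 : 0 < q1)
    (hpsum : p0 + p1 = 1) (hqsum : q0 + q1 = 1)
    (hmaj : max q0 q1 ≤ max p0 p1) (hple : p0 ≤ p1) :
    let q : ℝ := max q0 q1
    let x : ℝ := min (p1 * q / (p0 * (1 - q))) 1
    let y : ℝ := min (p0 * q / (p1 * (1 - q))) 1
    let s : ℝ := x * p0 + y * p1
    s = min p0 p1 / min q0 q1 ∧
      ({x * p0 / s, y * p1 / s} : Multiset ℝ) = ({q0, q1} : Multiset ℝ) := by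
  intro q x y s
  have hqmin : min q0 q1 = 1 - q := by
    rcases le_total q0 q1 with h | h <;> simp [q, min_eq_left, min_eq_right, max_eq_left, max_eq_right, h] <;> linarith
  have hqlb : (1:ℝ)/2 ≤ q := by
    rcases le_total q0 q1 with h | h <;> simp [q, max_eq_left, max_eq_right, h] <;> linarith
  have hq1q : 1 - q > 0 := by
    rcases le_total q0 q1 with h | h <;> simp [q, max_eq_left, max_eq_right, h] <;> linarith
  have hp0q : p0 ≤ q := by
    have : p0 ≤ 1/2 := by linarith
    linarith
  have hqp1 : q ≤ p1 := by
    have : max p0 p1 = p1 := max_eq_right hple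
    simpa [q, this] using hmaj
  have hx : x = 1 := by
    apply min_eq_right
    rw [le_div_iff₀ (by positivity)]
    nlinarith
  have hy : y = p0 * q / (p1 * (1 - q)) := by
    apply min_eq_left
    rw [div_le_one (by positivity)]
    nlinarith
  have hs : s = p0 / (1 - q) := by
    rw [show s = x * p0 + y * p1 from rfl, hx, hy]
    field_simp
    ring
  have hspos : 0 < s := by rw [hs]; positivity
  have hminp : min p0 p1 = p0 := min_eq_left hple
  constructor
  · rw [hs, hminp, hqmin]
  · have h1 : x * p0 / s = 1 - q := by
      rw [hx, hs]; field_simp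
    have h2 : y * p1 / s = q := by
      rw [hy, hs]; field_simp
    rw [h1, h2]
    rcases le_total q0 q1 with h | h
    · have : q = q1 := max_eq_right h
      rw [this, show (1:ℝ) - q1 = q0 by linarith]
    · have : q = q0 := max_eq_left h
      rw [this, show (1:ℝ) - q0 = q1 by linarith]
      exact Multiset.pair_comm q1 q0

/-- Local filtering on the control qubit: applying
`M₀ = √x |0⟩⟨0| + √y |1⟩⟨1|`, with `x = min(p1·q/(p0·(1−q)), 1)` and
`y = min(p0·q/(p1·(1−q)), 1)` where `q = max(p0', p1')`, to the state
`√p0 |0⟩ + √p1 |1⟩` yields the unnormalized vector `(√(x·p0), √(y·p1))`.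
Its squared norm (the success probability) is `s = x·p0 + y·p1 = min(p0,p1)/min(p0',p1')`,
and the normalized output is `√p0'' |0⟩ + √p1'' |1⟩` with `{p0'', p1''} = {p0', p1'}`
as a multiset, i.e. `{x·p0/s, y·p1/s} = {p0', p1'}`. -/
theorem filtering_success_probability (p0 p1 q0 q1 : ℝ)
    (hp0 : 0 < p0) (hp1 : 0 < p1) (hq0 : 0 < q0) (hq1 : 0 < q1)
    (hpsum : p0 + p1 = 1) (hqsum : q0 + q1 = 1)
    (hmaj : max q0 q1 ≤ max p0 p1) :
    let q : ℝ := max q0 q1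
    let x : ℝ := min (p1 * q / (p0 * (1 - q))) 1
    let y : ℝ := min (p0 * q / (p1 * (1 - q))) 1
    let s : ℝ := x * p0 + y * p1
    s = min p0 p1 / min q0 q1 ∧
      ({x * p0 / s, y * p1 / s} : Multiset ℝ) = ({q0, q1} : Multiset ℝ) := by
  rcases le_total p0 p1 with h | h
  · exact filter_aux p0 p1 q0 q1 hp0 hp1 hq0 hq1 hpsum hqsum hmaj h
  · have := filter_aux p1 p0 q0 q1 hp1 hp0 hq0 hq1 (by linarith) hqsum
      (by rwa [max_comm p0 p1] at hmaj) h
    intro q x y s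
    obtain ⟨h1, h2⟩ := this
    have hs' : s = y * p1 + x * p0 := by show x * p0 + y * p1 = _; ring
    refine ⟨?_, ?_⟩
    · rw [hs', min_comm p0 p1]; exact h1
    · rw [hs', Multiset.pair_comm]; exact h2
end
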